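/- Let S be a set of mutually commuting elements in a sequential effect algebra E. Then the bicommutant S′′ is a commutative sequential effect sub-algebra of E (every two elements of S′′ commute under ∘). -/
import Mathlib


/-- `x ≤ y` for a partially defined addition: there is `c` with `x + c` defined and `x + c = y`. -/
def pLe {E : Type*} (D : E → E → Prop) (add : E → E → E) (x y : E) : Prop :=
  ∃ c, D x c ∧ add x c = y

/-- An effect algebra: a partially defined commutative associative addition with zero,
the zero-one law and unique complements. `D a b` means "`a + b` is defined". -/
structure EffectAlgebra (E : Type*) where
  D : E → E → Prop
  add : E → E → E
  zero : E
  one : E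
  compl : E → E
  D_comm : ∀ {a b}, D a b → D b a
  add_comm' : ∀ {a b}, D a b → add a b = add b a
  D_assoc_left : ∀ {a b c}, D b c → D a (add b c) → D a b
  D_assoc : ∀ {a b c}, D b c → D a (add b c) → D (add a b) c
  add_assoc' : ∀ {a b c}, D b c → D a (add b c) → add a (add b c) = add (add a b) c
  D_zero : ∀ a, D a zero
  add_zero' : ∀ a, add a zero = a
  zero_one : ∀ {a}, D a one → a = zero
  D_compl : ∀ a, D a (compl a)
  add_compl : ∀ a, add a (compl a) = one
  compl_unique : ∀ {a b}, D a b → add a b = one → b = compl a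

namespace EffectAlgebra
variable {E : Type*} (EA : EffectAlgebra E)
/-- The canonical order of an effect algebra. -/
def le (a b : E) : Prop := pLe EA.D EA.add a b
end EffectAlgebra

/-- A sequential effect algebra (Gudder–Greechie): an effect algebra with a total
binary operation `seq` (the sequential product) satisfying the five axioms. -/
structure SEA (E : Type*) extends EffectAlgebra E where
  seq : E → E → E
  seq_D : ∀ {b c} (a : E), D b c → D (seq a b) (seq a c)
  seq_add : ∀ {b c} (a : E), D b c → seq a (add b c) = add (seq a b) (seq a c)
  one_seq : ∀ a, seq one a = a
  seq_orth : ∀ {a b}, seq a b = zero → seq b a = zero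
  seq_compl : ∀ {a b}, seq a b = seq b a → seq a (compl b) = seq (compl b) a
  seq_assoc : ∀ {a b}, seq a b = seq b a → ∀ c, seq a (seq b c) = seq (seq a b) c
  comm_seq : ∀ {a b c}, seq c a = seq a c → seq c b = seq b c →
    seq c (seq a b) = seq (seq a b) c
  comm_add : ∀ {a b c}, seq c a = seq a c → seq c b = seq b c → D a b →
    seq c (add a b) = seq (add a b) c

namespace SEA
variable {E : Type*} (SE : SEA E)
/-- The order of the underlying effect algebra. -/
def le (a b : E) : Prop := pLe SE.D SE.add a b
end SEA

/-- The commutant of a subset `S` of a sequential effect algebra. -/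
def SEA.commutant {E : Type*} (SE : SEA E) (S : Set E) : Set E :=
  {a | ∀ s ∈ S, SE.seq a s = SE.seq s a}

/-- If `S` is a set of mutually commuting elements of a sequential effect algebra,
then the bicommutant `S′′` is commutative: any two of its elements commute. -/
theorem SEA.bicommutant_commutative {E : Type*} (SE : SEA E) (S : Set E)
    (hS : ∀ a ∈ S, ∀ b ∈ S, SE.seq a b = SE.seq b a) :
    ∀ a ∈ SE.commutant (SE.commutant S), ∀ b ∈ SE.commutant (SE.commutant S),
      SE.seq a b = SE.seq b a := by
  intro a ha b hb
  exact ha b (fun s hs => hb s (fun t ht => hS s hs t ht))
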